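/- Let φ be a diffuse submeasure on a Boolean algebra 𝒜 and let μ : 𝒜 → ℝ be a (finitely additive, nonnegative) measure with 0 ≠ μ ≤ φ. Then for every ξ > 0, h_φ(ξ) ≤ 1/μ(1), where h_φ(ξ) := c_𝒜(𝒜_{φ,ξ})/ξ with 𝒜_{φ,ξ} = {A ∈ 𝒜 : φ(A) ≤ ξ} and c_𝒜 the covering number. In particular, if φ is non-pathological then h_φ is bounded. -/

import Mathlib

/-- The "atom" of the subalgebra generated by the finite sequence `C`,
corresponding to a choice `s` of sides. -/
def atomOf {α : Type*} [BooleanAlgebra α] {m : ℕ} (C : Fin m → α) (s : Fin m → Bool) : α :=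
  Finset.univ.inf (fun i => if s i then C i else (C i)ᶜ)

/-- The covering multiplicity of a finite sequence in a Boolean algebra: the largest `k`
such that every nonzero atom of the generated subalgebra lies below at least `k` of the `C i`. -/
noncomputable def covMult {α : Type*} [BooleanAlgebra α] {m : ℕ} (C : Fin m → α) : ℕ :=
  sSup {k : ℕ | ∀ s : Fin m → Bool, atomOf C s ≠ ⊥ →
    k ≤ (Finset.univ.filter (fun i => s i = true)).card}

/-- Kelley's covering number of a family `ℬ` in a Boolean algebra. -/
noncomputable def covNumber {α : Type*} [BooleanAlgebra α] (ℬ : Set α) : ℝ :=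
  sSup { r : ℝ | ∃ n : ℕ, 0 < n ∧ ∃ C : Fin n → α,
    (∀ i, C i ∈ ℬ) ∧ r = (covMult C : ℝ) / n }

/-- The function `h_φ` associated with a submeasure `φ`. -/
noncomputable def hphi {α : Type*} [BooleanAlgebra α] (φ : α → ℝ) (ξ : ℝ) : ℝ :=
  covNumber {A : α | φ A ≤ ξ} / ξ

/-- A submeasure on a Boolean algebra. -/
def IsSubmeasure {α : Type*} [BooleanAlgebra α] (φ : α → ℝ) : Prop :=
  φ ⊥ = 0 ∧ Monotone φ ∧ ∀ a b : α, φ (a ⊔ b) ≤ φ a + φ b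

/-- A diffuse submeasure: the unit can be covered by finitely many elements of
arbitrarily small submeasure. -/
def IsDiffuse {α : Type*} [BooleanAlgebra α] (φ : α → ℝ) : Prop :=
  ∀ ε : ℝ, 0 < ε → ∃ ℬ : Finset α, ℬ.sup id = ⊤ ∧ ∀ B ∈ ℬ, φ B ≤ ε

/-- A (nonnegative, finitely additive) measure on a Boolean algebra. -/
def IsAddMeasure {α : Type*} [BooleanAlgebra α] (μ : α → ℝ) : Prop :=
  μ ⊥ = 0 ∧ (∀ a, 0 ≤ μ a) ∧ ∀ a b : α, Disjoint a b → μ (a ⊔ b) = μ a + μ b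


section Helpers
variable {α : Type*} [BooleanAlgebra α] {m : ℕ} (C : Fin m → α)

lemma atomOf_le (s : Fin m → Bool) (i : Fin m) :
    atomOf C s ≤ if s i then C i else (C i)ᶜ :=
  Finset.inf_le (Finset.mem_univ i)

lemma atomOf_disjoint {s t : Fin m → Bool} (h : s ≠ t) :
    Disjoint (atomOf C s) (atomOf C t) := by
  obtain ⟨i, hi⟩ := Function.ne_iff.mp h
  have h1 := atomOf_le C s i
  have h2 := atomOf_le C t i
  cases hs : s i <;> cases ht : t i <;> simp [hs, ht] at hi h1 h2 ⊢
  · exact Disjoint.mono h1 h2 disjoint_compl_left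
  · exact Disjoint.mono h1 h2 disjoint_compl_right

lemma le_sup_atomOf (t : Finset (Fin m)) :
    t.inf (fun i => C i ⊔ (C i)ᶜ) ≤
      (Finset.univ : Finset (Fin m → Bool)).sup
        (fun s => t.inf (fun i => if s i then C i else (C i)ᶜ)) := by
  classical
  induction t using Finset.induction_on with
  | empty =>
      simpa using Finset.le_sup (f := fun s : Fin m → Bool =>
        (∅ : Finset (Fin m)).inf (fun i => if s i then C i else (C i)ᶜ))
        (Finset.mem_univ (fun _ => true))
  | @insert a t ha ih =>
      rw [Finset.inf_insert]
      have step : (C a ⊔ (C a)ᶜ) ⊓ t.inf (fun i => C i ⊔ (C i)ᶜ) ≤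
          (C a ⊔ (C a)ᶜ) ⊓ (Finset.univ : Finset (Fin m → Bool)).sup
            (fun s => t.inf (fun i => if s i then C i else (C i)ᶜ)) :=
        inf_le_inf_left _ ih
      refine step.trans ?_
      rw [Finset.sup_inf_distrib_left]
      apply Finset.sup_le
      intro s _
      rw [inf_sup_right]
      apply sup_le
      · have : (insert a t).inf (fun i => if Function.update s a true i then C i else (C i)ᶜ)
            = C a ⊓ t.inf (fun i => if s i then C i else (C i)ᶜ) := by
          rw [Finset.inf_insert]
          congr 1
          · simp [Function.update_self]
          · apply Finset.inf_congr rfl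
            intro i hi
            rw [Function.update_of_ne (by rintro rfl; exact ha hi)]
        rw [← this]
        exact Finset.le_sup (f := fun s : Fin m → Bool => (insert a t).inf fun i => if s i = true then C i else (C i)ᶜ) (Finset.mem_univ (Function.update s a true))
      · have : (insert a t).inf (fun i => if Function.update s a false i then C i else (C i)ᶜ)
            = (C a)ᶜ ⊓ t.inf (fun i => if s i then C i else (C i)ᶜ) := by
          rw [Finset.inf_insert]
          congr 1
          · simp [Function.update_self]
          · apply Finset.inf_congr rfl
            intro i hi
            rw [Function.update_of_ne (by rintro rfl; exact ha hi)]
        rw [← this]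
        exact Finset.le_sup (f := fun s : Fin m → Bool => (insert a t).inf fun i => if s i = true then C i else (C i)ᶜ) (Finset.mem_univ (Function.update s a false))

lemma sup_atomOf : (Finset.univ : Finset (Fin m → Bool)).sup (atomOf C) = ⊤ := by
  refine top_le_iff.mp ?_
  have h := le_sup_atomOf C Finset.univ
  have h2 : (Finset.univ : Finset (Fin m)).inf (fun i => C i ⊔ (C i)ᶜ) = ⊤ := by
    simp
  rw [h2] at h
  exact h

end Helpers

section MeasHelpers
variable {α : Type*} [BooleanAlgebra α] {μ : α → ℝ}

lemma addMeasure_mono (hμ : IsAddMeasure μ) : Monotone μ := by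
  intro a b hab
  have h := hμ.2.2 a (b \ a) disjoint_sdiff_self_right
  rw [sup_sdiff_cancel' le_rfl hab] at h
  have := hμ.2.1 (b \ a)
  linarith

lemma addMeasure_sup (hμ : IsAddMeasure μ) {ι : Type*} [DecidableEq ι]
    (t : Finset ι) (f : ι → α) (hd : (t : Set ι).Pairwise (Function.onFun Disjoint f)) :
    μ (t.sup f) = ∑ i ∈ t, μ (f i) := by
  induction t using Finset.induction_on with
  | empty => simpa using hμ.1
  | @insert a t ha ih =>
      rw [Finset.sup_insert, Finset.sum_insert ha]
      have hdisj : Disjoint (f a) (t.sup f) := by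
        rw [Finset.disjoint_sup_right]
        intro i hi
        exact hd (Finset.mem_insert_self a t) (Finset.mem_insert_of_mem hi)
          (by rintro rfl; exact ha hi)
      rw [hμ.2.2 _ _ hdisj, ih (hd.mono (by simp [Finset.coe_insert, Set.subset_insert]))]

end MeasHelpers

lemma covMult_mem {α : Type*} [BooleanAlgebra α] (hnt : (⊥ : α) ≠ ⊤) {n : ℕ} (C : Fin n → α) :
    ∀ s : Fin n → Bool, atomOf C s ≠ ⊥ →
      covMult C ≤ (Finset.univ.filter (fun i => s i = true)).card := by
  have hex : ∃ s : Fin n → Bool, atomOf C s ≠ ⊥ := by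
    by_contra h
    push_neg at h
    have : (Finset.univ : Finset (Fin n → Bool)).sup (atomOf C) = ⊥ :=
      Finset.sup_eq_bot_iff _ _ |>.mpr fun s _ => h s
    exact hnt (by rw [← sup_atomOf C, this])
  obtain ⟨s₀, hs₀⟩ := hex
  have hbdd : BddAbove {k : ℕ | ∀ s : Fin n → Bool, atomOf C s ≠ ⊥ →
      k ≤ (Finset.univ.filter (fun i => s i = true)).card} :=
    ⟨(Finset.univ.filter (fun i => s₀ i = true)).card, fun k hk => hk s₀ hs₀⟩
  have hne : {k : ℕ | ∀ s : Fin n → Bool, atomOf C s ≠ ⊥ →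
      k ≤ (Finset.univ.filter (fun i => s i = true)).card}.Nonempty :=
    ⟨0, fun _ _ => Nat.zero_le _⟩
  exact Nat.sSup_mem hne hbdd

lemma key_ineq {α : Type*} [BooleanAlgebra α] (μ : α → ℝ) (hμ : IsAddMeasure μ)
    (hnt : (⊥ : α) ≠ ⊤) {n : ℕ} (C : Fin n → α) :
    (covMult C : ℝ) * μ ⊤ ≤ ∑ i, μ (C i) := by
  classical
  have hpair : ((Finset.univ : Finset (Fin n → Bool)) : Set (Fin n → Bool)).Pairwise
      (Function.onFun Disjoint (atomOf C)) := fun s _ t _ hst => atomOf_disjoint C hst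
  have htop : μ ⊤ = ∑ s : Fin n → Bool, μ (atomOf C s) := by
    rw [← sup_atomOf C, addMeasure_sup hμ _ _ hpair]
  -- lower bound each μ (C i)
  have hCi : ∀ i : Fin n, ∑ s ∈ Finset.univ.filter (fun s : Fin n → Bool => s i = true),
      μ (atomOf C s) ≤ μ (C i) := by
    intro i
    rw [← addMeasure_sup hμ _ _ (hpair.mono (by simp [Finset.coe_filter, Set.sep_subset]))]
    apply addMeasure_mono hμ
    apply Finset.sup_le
    intro s hs
    have := atomOf_le C s i
    rw [(Finset.mem_filter.mp hs).2] at this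
    simpa using this
  have step1 : ∑ s : Fin n → Bool, (covMult C : ℝ) * μ (atomOf C s) ≤
      ∑ s : Fin n → Bool, ((Finset.univ.filter (fun i => s i = true)).card : ℝ) * μ (atomOf C s) := by
    apply Finset.sum_le_sum
    intro s _
    by_cases hb : atomOf C s = ⊥
    · simp [hb, hμ.1]
    · exact mul_le_mul_of_nonneg_right
        (Nat.cast_le.mpr (covMult_mem hnt C s hb)) (hμ.2.1 _)
  have step2 : ∑ s : Fin n → Bool, ((Finset.univ.filter (fun i => s i = true)).card : ℝ) *
      μ (atomOf C s) = ∑ i : Fin n, ∑ s ∈ Finset.univ.filter (fun s : Fin n → Bool => s i = true),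
      μ (atomOf C s) := by
    have hs : ∀ s : Fin n → Bool,
        ((Finset.univ.filter (fun i : Fin n => s i = true)).card : ℝ) * μ (atomOf C s)
        = ∑ i : Fin n, if s i = true then μ (atomOf C s) else 0 := by
      intro s
      rw [← Finset.sum_filter, Finset.sum_const, nsmul_eq_mul]
    simp_rw [hs]
    rw [Finset.sum_comm]
    exact Finset.sum_congr rfl fun i _ => (Finset.sum_filter _ _).symm
  calc (covMult C : ℝ) * μ ⊤ = ∑ s : Fin n → Bool, (covMult C : ℝ) * μ (atomOf C s) := by
        rw [htop, Finset.mul_sum]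
    _ ≤ _ := step1
    _ = _ := step2
    _ ≤ ∑ i : Fin n, μ (C i) := Finset.sum_le_sum fun i _ => hCi i


/-- If a nonzero measure lies below a diffuse submeasure `φ`, then `h_φ ≤ 1/μ(1)`;
in particular `h_φ` is bounded for non-pathological `φ`. -/
theorem hphi_le_of_measure_le {α : Type*} [BooleanAlgebra α] (φ : α → ℝ)
    (hφ : IsSubmeasure φ) (hd : IsDiffuse φ) (μ : α → ℝ) (hμ : IsAddMeasure μ)
    (hle : ∀ a, μ a ≤ φ a) (hne : μ ≠ 0) :
    ∀ ξ : ℝ, 0 < ξ → hphi φ ξ ≤ 1 / μ ⊤ := by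
  intro ξ hξ
  obtain ⟨a, ha⟩ : ∃ a, μ a ≠ 0 := by
    by_contra h; push_neg at h; exact hne (funext h)
  have hnt : (⊥ : α) ≠ ⊤ := by
    intro h
    apply ha
    have h2 : a ≤ ⊥ := h ▸ le_top
    rw [le_bot_iff.mp h2, hμ.1]
  have hatop : μ a ≤ μ ⊤ := addMeasure_mono hμ le_top
  have hμtop : 0 < μ ⊤ :=
    lt_of_le_of_ne (hμ.2.1 ⊤) fun h => ha (le_antisymm (h ▸ hatop) (hμ.2.1 a))
  have hcov : covNumber {A : α | φ A ≤ ξ} ≤ ξ / μ ⊤ := by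
    apply Real.sSup_le
    · rintro r ⟨n, hn, C, hC, rfl⟩
      have hk := key_ineq μ hμ hnt C
      have hsum : ∑ i, μ (C i) ≤ n * ξ := by
        calc ∑ i, μ (C i) ≤ ∑ _i : Fin n, ξ :=
              Finset.sum_le_sum fun i _ => (hle (C i)).trans (hC i)
          _ = n * ξ := by simp [mul_comm]
      rw [div_le_div_iff₀ (by exact_mod_cast hn) hμtop]
      calc (covMult C : ℝ) * μ ⊤ ≤ ∑ i, μ (C i) := hk
        _ ≤ n * ξ := hsum
        _ = ξ * n := mul_comm _ _
    · positivity
  unfold hphi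
  have hfin : covNumber {A : α | φ A ≤ ξ} / ξ ≤ (ξ / μ ⊤) / ξ :=
    (div_le_div_iff_of_pos_right hξ).mpr hcov
  refine hfin.trans_eq ?_
  field_simp
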